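/- For $C^1$ solutions with $\rho>0$ and $u_1\neq 0$, the 2-D steady isentropic Euler system with external force $\partial_1(\rho u_1)+\partial_2(\rho u_2)=0$, $\partial_1(\rho u_1^2+P)+\partial_2(\rho u_1u_2)=\rho\partial_1\Phi$, $\partial_1(\rho u_1u_2)+\partial_2(\rho u_2^2+P)=\rho\partial_2\Phi$ (with $P=\rho^\gamma$) is equivalent to the deformation–curl system: $\sum_{i,j=1}^2 (c^2(\rho)\delta_{ij}-u_iu_j)\partial_i u_j + u_1\partial_1\Phi + u_2\partial_2\Phi = 0$, $\partial_1 u_2 - \partial_2 u_1 = -\frac{\partial_2 B}{u_1}$, and $u_1\partial_1 B + u_2\partial_2 B = 0$, where $B=\tfrac12|\mathbf u|^2 + \frac{\gamma}{\gamma-1}\rho^{\gamma-1}-\Phi$ and $\rho$ is expressed through $B$, $\Phi$, $|\mathbf u|^2$ via $\rho=[\frac{\gamma-1}{\gamma}(B+\Phi-\tfrac12|\mathbf u|^2)]^{1/(\gamma-1)}$. -/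

import Mathlib

noncomputable section

/-- First partial derivative `∂₁` of a function on `ℝ²`. -/
def pd1 (g : ℝ × ℝ → ℝ) (x : ℝ × ℝ) : ℝ := fderiv ℝ g x (1, 0)

/-- Second partial derivative `∂₂` of a function on `ℝ²`. -/
def pd2 (g : ℝ × ℝ → ℝ) (x : ℝ × ℝ) : ℝ := fderiv ℝ g x (0, 1)

lemma pd1_eq {f : ℝ × ℝ → ℝ} {f' : (ℝ × ℝ) →L[ℝ] ℝ} {x : ℝ × ℝ}
    (h : HasFDerivAt f f' x) : pd1 f x = f' (1, 0) := by
  rw [pd1, h.fderiv]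

lemma pd2_eq {f : ℝ × ℝ → ℝ} {f' : (ℝ × ℝ) →L[ℝ] ℝ} {x : ℝ × ℝ}
    (h : HasFDerivAt f f' x) : pd2 f x = f' (0, 1) := by
  rw [pd2, h.fderiv]

theorem stmt9 (γ : ℝ) (hγ : 1 < γ) (Ω : Set (ℝ × ℝ)) (hΩ : IsOpen Ω)
    (u1 u2 ρ Φ : ℝ × ℝ → ℝ)
    (hu1 : ContDiff ℝ 1 u1) (hu2 : ContDiff ℝ 1 u2)
    (hρ : ContDiff ℝ 1 ρ) (hΦ : ContDiff ℝ 1 Φ)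
    (hρpos : ∀ x ∈ Ω, 0 < ρ x) (hu1ne : ∀ x ∈ Ω, u1 x ≠ 0) :
    (∀ x ∈ Ω,
        pd1 (fun y => ρ y * u1 y) x + pd2 (fun y => ρ y * u2 y) x = 0 ∧
        pd1 (fun y => ρ y * (u1 y) ^ 2 + ρ y ^ γ) x
          + pd2 (fun y => ρ y * u1 y * u2 y) x = ρ x * pd1 Φ x ∧
        pd1 (fun y => ρ y * u1 y * u2 y) x
          + pd2 (fun y => ρ y * (u2 y) ^ 2 + ρ y ^ γ) x = ρ x * pd2 Φ x) ↔
    (∀ x ∈ Ω,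
        ((γ * ρ x ^ (γ - 1) - (u1 x) ^ 2) * pd1 u1 x
            - u1 x * u2 x * pd1 u2 x - u2 x * u1 x * pd2 u1 x
            + (γ * ρ x ^ (γ - 1) - (u2 x) ^ 2) * pd2 u2 x
            + u1 x * pd1 Φ x + u2 x * pd2 Φ x = 0) ∧
        (pd1 u2 x - pd2 u1 x =
          -(pd2 (fun y => 1 / 2 * ((u1 y) ^ 2 + (u2 y) ^ 2)
              + γ / (γ - 1) * ρ y ^ (γ - 1) - Φ y) x) / u1 x) ∧
        (u1 x * pd1 (fun y => 1 / 2 * ((u1 y) ^ 2 + (u2 y) ^ 2)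
              + γ / (γ - 1) * ρ y ^ (γ - 1) - Φ y) x
          + u2 x * pd2 (fun y => 1 / 2 * ((u1 y) ^ 2 + (u2 y) ^ 2)
              + γ / (γ - 1) * ρ y ^ (γ - 1) - Φ y) x = 0) ∧
        ρ x = ((γ - 1) / γ *
            ((1 / 2 * ((u1 x) ^ 2 + (u2 x) ^ 2) + γ / (γ - 1) * ρ x ^ (γ - 1) - Φ x)
              + Φ x - 1 / 2 * ((u1 x) ^ 2 + (u2 x) ^ 2))) ^ (1 / (γ - 1))) := by
  have hγ0 : (0:ℝ) < γ := lt_trans one_pos hγ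
  have hγ1 : γ - 1 ≠ 0 := sub_ne_zero.mpr (ne_of_gt hγ)
  refine forall₂_congr fun x hx => ?_
  have hr : 0 < ρ x := hρpos x hx
  have hv : u1 x ≠ 0 := hu1ne x hx
  have hdu1 : HasFDerivAt u1 (fderiv ℝ u1 x) x := (hu1.differentiable one_ne_zero x).hasFDerivAt
  have hdu2 : HasFDerivAt u2 (fderiv ℝ u2 x) x := (hu2.differentiable one_ne_zero x).hasFDerivAt
  have hdρ : HasFDerivAt ρ (fderiv ℝ ρ x) x := (hρ.differentiable one_ne_zero x).hasFDerivAt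
  have hdΦ : HasFDerivAt Φ (fderiv ℝ Φ x) x := (hΦ.differentiable one_ne_zero x).hasFDerivAt
  have hsq1 : HasFDerivAt (fun y => (u1 y) ^ 2)
      (u1 x • fderiv ℝ u1 x + u1 x • fderiv ℝ u1 x) x := by
    simpa [pow_two] using hdu1.fun_mul hdu1
  have hsq2 : HasFDerivAt (fun y => (u2 y) ^ 2)
      (u2 x • fderiv ℝ u2 x + u2 x • fderiv ℝ u2 x) x := by
    simpa [pow_two] using hdu2.fun_mul hdu2
  have hpowγ : HasFDerivAt (fun y => ρ y ^ γ)
      ((γ * ρ x ^ (γ - 1)) • fderiv ℝ ρ x) x := hdρ.rpow_const (Or.inl hr.ne')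
  have hpowγ1 : HasFDerivAt (fun y => ρ y ^ (γ - 1))
      (((γ - 1) * ρ x ^ (γ - 1 - 1)) • fderiv ℝ ρ x) x := hdρ.rpow_const (Or.inl hr.ne')
  have hc1 : pd1 (fun y => ρ y * u1 y) x
      = ρ x * pd1 u1 x + u1 x * pd1 ρ x := by
    rw [pd1_eq (hdρ.fun_mul hdu1)]; simp [pd1]
  have hc2 : pd2 (fun y => ρ y * u2 y) x
      = ρ x * pd2 u2 x + u2 x * pd2 ρ x := by
    rw [pd2_eq (hdρ.fun_mul hdu2)]; simp [pd2]
  have hc3 : pd1 (fun y => ρ y * (u1 y) ^ 2 + ρ y ^ γ) x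
      = ρ x * (2 * u1 x * pd1 u1 x) + (u1 x) ^ 2 * pd1 ρ x
        + γ * ρ x ^ (γ - 1) * pd1 ρ x := by
    rw [pd1_eq ((hdρ.fun_mul hsq1).fun_add hpowγ)]; simp [pd1]; ring
  have hc4 : pd2 (fun y => ρ y * u1 y * u2 y) x
      = ρ x * u1 x * pd2 u2 x + u2 x * (ρ x * pd2 u1 x + u1 x * pd2 ρ x) := by
    rw [pd2_eq ((hdρ.fun_mul hdu1).fun_mul hdu2)]; simp [pd2]; ring
  have hc5 : pd1 (fun y => ρ y * u1 y * u2 y) x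
      = ρ x * u1 x * pd1 u2 x + u2 x * (ρ x * pd1 u1 x + u1 x * pd1 ρ x) := by
    rw [pd1_eq ((hdρ.fun_mul hdu1).fun_mul hdu2)]; simp [pd1]; ring
  have hc6 : pd2 (fun y => ρ y * (u2 y) ^ 2 + ρ y ^ γ) x
      = ρ x * (2 * u2 x * pd2 u2 x) + (u2 x) ^ 2 * pd2 ρ x
        + γ * ρ x ^ (γ - 1) * pd2 ρ x := by
    rw [pd2_eq ((hdρ.fun_mul hsq2).fun_add hpowγ)]; simp [pd2]; ring
  have hB : HasFDerivAt
      (fun y => 1 / 2 * ((u1 y) ^ 2 + (u2 y) ^ 2) + γ / (γ - 1) * ρ y ^ (γ - 1) - Φ y)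
      (((1:ℝ) / 2) • (u1 x • fderiv ℝ u1 x + u1 x • fderiv ℝ u1 x
          + (u2 x • fderiv ℝ u2 x + u2 x • fderiv ℝ u2 x))
        + (γ / (γ - 1)) • (((γ - 1) * ρ x ^ (γ - 1 - 1)) • fderiv ℝ ρ x)
        - fderiv ℝ Φ x) x :=
    (((hsq1.add hsq2).const_mul (1/2)).add (hpowγ1.const_mul (γ/(γ-1)))).sub hdΦ
  have hB1 : pd1 (fun y => 1 / 2 * ((u1 y) ^ 2 + (u2 y) ^ 2)
        + γ / (γ - 1) * ρ y ^ (γ - 1) - Φ y) x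
      = u1 x * pd1 u1 x + u2 x * pd1 u2 x + γ * ρ x ^ (γ - 1 - 1) * pd1 ρ x - pd1 Φ x := by
    rw [pd1_eq hB]; simp [pd1]; field_simp; ring
  have hB2 : pd2 (fun y => 1 / 2 * ((u1 y) ^ 2 + (u2 y) ^ 2)
        + γ / (γ - 1) * ρ y ^ (γ - 1) - Φ y) x
      = u1 x * pd2 u1 x + u2 x * pd2 u2 x + γ * ρ x ^ (γ - 1 - 1) * pd2 ρ x - pd2 Φ x := by
    rw [pd2_eq hB]; simp [pd2]; field_simp; ring
  have hkey : ρ x ^ (γ - 1) = ρ x ^ (γ - 1 - 1) * ρ x := by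
    rw [← Real.rpow_add_one hr.ne' (γ - 1 - 1)]
    congr 1
    ring
  have hD4 : ρ x = ((γ - 1) / γ *
      ((1 / 2 * ((u1 x) ^ 2 + (u2 x) ^ 2) + γ / (γ - 1) * ρ x ^ (γ - 1) - Φ x)
        + Φ x - 1 / 2 * ((u1 x) ^ 2 + (u2 x) ^ 2))) ^ (1 / (γ - 1)) := by
    have hinner : (γ - 1) / γ *
        ((1 / 2 * ((u1 x) ^ 2 + (u2 x) ^ 2) + γ / (γ - 1) * ρ x ^ (γ - 1) - Φ x)
          + Φ x - 1 / 2 * ((u1 x) ^ 2 + (u2 x) ^ 2)) = ρ x ^ (γ - 1) := by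
      field_simp
      ring
    rw [hinner, ← Real.rpow_mul hr.le, mul_one_div, div_self hγ1, Real.rpow_one]
  rw [hc1, hc2, hc3, hc4, hc5, hc6, hB1, hB2]
  constructor
  · rintro ⟨e1, e2, e3⟩
    have hM1r : ρ x * (u1 x * pd1 u1 x + u2 x * pd2 u1 x
        + γ * ρ x ^ (γ - 1 - 1) * pd1 ρ x) = ρ x * pd1 Φ x := by
      linear_combination e2 - u1 x * e1 - γ * pd1 ρ x * hkey
    have hM2r : ρ x * (u1 x * pd1 u2 x + u2 x * pd2 u2 x
        + γ * ρ x ^ (γ - 1 - 1) * pd2 ρ x) = ρ x * pd2 Φ x := by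
      linear_combination e3 - u2 x * e1 - γ * pd2 ρ x * hkey
    have hM1 := mul_left_cancel₀ hr.ne' hM1r
    have hM2 := mul_left_cancel₀ hr.ne' hM2r
    refine ⟨?_, ?_, ?_, hD4⟩
    · linear_combination γ * ρ x ^ (γ - 1 - 1) * e1 - u1 x * hM1 - u2 x * hM2
        + γ * (pd1 u1 x + pd2 u2 x) * hkey
    · rw [eq_div_iff hv]
      linear_combination hM2
    · linear_combination u1 x * hM1 + u2 x * hM2
  · rintro ⟨d1, d2, d3, -⟩
    rw [eq_div_iff hv] at d2
    have hM2 : u1 x * pd1 u2 x + u2 x * pd2 u2 x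
        + γ * ρ x ^ (γ - 1 - 1) * pd2 ρ x = pd2 Φ x := by
      linear_combination d2
    have hM1r : u1 x * (u1 x * pd1 u1 x + u2 x * pd2 u1 x
        + γ * ρ x ^ (γ - 1 - 1) * pd1 ρ x) = u1 x * pd1 Φ x := by
      linear_combination d3 - u2 x * hM2
    have hM1 := mul_left_cancel₀ hv hM1r
    have hcne : γ * ρ x ^ (γ - 1 - 1) ≠ 0 := by positivity
    have hE1r : (γ * ρ x ^ (γ - 1 - 1)) *
        ((ρ x * pd1 u1 x + u1 x * pd1 ρ x) + (ρ x * pd2 u2 x + u2 x * pd2 ρ x))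
        = (γ * ρ x ^ (γ - 1 - 1)) * 0 := by
      linear_combination d1 + u1 x * hM1 + u2 x * hM2
        - γ * (pd1 u1 x + pd2 u2 x) * hkey
    have hE1 := mul_left_cancel₀ hcne hE1r
    refine ⟨hE1, ?_, ?_⟩
    · linear_combination u1 x * hE1 + ρ x * hM1 + γ * pd1 ρ x * hkey
    · linear_combination u2 x * hE1 + ρ x * hM2 + γ * pd2 ρ x * hkey
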